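/- arXiv:2504.06077 — 8 statements merged into one kernel-verified Lean document; each statement's English description precedes it below -/
import Mathlib

section
/- Let V be a finite-dimensional real inner product space and let A, B, C be subspaces of V with B ⊆ A and C ⊆ A. Then (A ⊖ B) ⊖ (C ⊖ (B ∩ C)) = A ⊖ (B + C). -/
/-- Difference of subspaces: `W₁ ⊖ W₂ := W₁ ⊓ W₂ᗮ`. -/
noncomputable def Submodule.sdiffOrtho {V : Type*} [NormedAddCommGroup V] [InnerProductSpace ℝ V]
    (W₁ W₂ : Submodule ℝ V) : Submodule ℝ V :=
  W₁ ⊓ W₂ᗮ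

/-- For subspaces `B, C ⊆ A` of a finite-dimensional real inner product space,
`(A ⊖ B) ⊖ (C ⊖ (B ∩ C)) = A ⊖ (B + C)`. -/
theorem sdiffOrtho_sdiffOrtho_eq_sdiffOrtho_sup
    {V : Type*} [NormedAddCommGroup V] [InnerProductSpace ℝ V] [FiniteDimensional ℝ V]
    (A B C : Submodule ℝ V) (hB : B ≤ A) (hC : C ≤ A) :
    (A.sdiffOrtho B).sdiffOrtho (C.sdiffOrtho (B ⊓ C)) = A.sdiffOrtho (B ⊔ C) := by
  unfold Submodule.sdiffOrtho
  rw [← Submodule.inf_orthogonal]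
  refine le_antisymm ?_ ?_ <;>
    simp only [SetLike.le_def, Submodule.mem_inf, Submodule.mem_orthogonal]
  · rintro x ⟨⟨hxA, hxB⟩, hx2⟩
    refine ⟨hxA, hxB, ?_⟩
    intro c hc
    have hdec : (B ⊓ C) ⊔ ((B ⊓ C)ᗮ ⊓ C) = C :=
      Submodule.sup_orthogonal_inf_of_hasOrthogonalProjection inf_le_right
    rw [← hdec] at hc
    obtain ⟨c₁, hc₁, c₂, hc₂, rfl⟩ := Submodule.mem_sup.mp hc
    rw [inner_add_left, hxB c₁ hc₁.1, hx2 c₂ ⟨hc₂.2, hc₂.1⟩, add_zero]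
  · rintro x ⟨hxA, hxB, hxC⟩
    exact ⟨⟨hxA, hxB⟩, fun y hy => hxC y hy.1⟩
end

section
/- Let V be a finite-dimensional real inner product space and let A, B, C be subspaces of V with B ⊆ A and C ⊆ A. Then, as an equality of integers, dim((A ⊖ B) ⊖ (C ⊖ (B ∩ C))) = (dim A − dim B) − (dim C − dim(B ∩ C)). -/
open Module Submodule

lemma finrank_inf_orthogonal_gen {V : Type*} [NormedAddCommGroup V] [InnerProductSpace ℝ V]
    [FiniteDimensional ℝ V] (W U : Submodule ℝ V) :
    (finrank ℝ ↥(W ⊓ Uᗮ) : ℤ) =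
      (finrank ℝ ↥W : ℤ) - finrank ℝ ↥U + finrank ℝ ↥(U ⊓ Wᗮ) := by
  have h1 := Submodule.finrank_sup_add_finrank_inf_eq W Uᗮ
  have h2 := Submodule.finrank_add_finrank_orthogonal U
  have h3 := Submodule.finrank_add_finrank_orthogonal (W ⊔ Uᗮ)
  have h4 : (W ⊔ Uᗮ)ᗮ = U ⊓ Wᗮ := by
    rw [← Submodule.inf_orthogonal, Submodule.orthogonal_orthogonal, inf_comm]
  rw [h4] at h3
  omega

/-- For subspaces `B, C ⊆ A` of a finite-dimensional real inner product space,
`dim((A ⊖ B) ⊖ (C ⊖ (B ∩ C))) = (dim A − dim B) − (dim C − dim (B ∩ C))` as integers. -/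
theorem finrank_sdiffOrtho_sdiffOrtho
    {V : Type*} [NormedAddCommGroup V] [InnerProductSpace ℝ V] [FiniteDimensional ℝ V]
    (A B C : Submodule ℝ V) (hB : B ≤ A) (hC : C ≤ A) :
    (Module.finrank ℝ ↥((A.sdiffOrtho B).sdiffOrtho (C.sdiffOrtho (B ⊓ C))) : ℤ) =
      ((Module.finrank ℝ ↥A : ℤ) - (Module.finrank ℝ ↥B : ℤ)) -
        ((Module.finrank ℝ ↥C : ℤ) - (Module.finrank ℝ ↥(B ⊓ C) : ℤ)) := by
  have hbot : (C ⊓ (B ⊓ C)ᗮ) ⊓ (A ⊓ Bᗮ)ᗮ = ⊥ := by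
    rw [eq_bot_iff]
    rintro x ⟨⟨hxC, hxBC⟩, hxO⟩
    have hxA : x ∈ B ⊔ Bᗮ ⊓ A := by
      rw [Submodule.sup_orthogonal_inf_of_hasOrthogonalProjection hB]
      exact hC hxC
    rw [Submodule.mem_sup] at hxA
    obtain ⟨b, hb, y, hy, hxy⟩ := hxA
    have h1 : inner ℝ y x = (0 : ℝ) := hxO y ⟨hy.2, hy.1⟩
    have h2 : inner ℝ b y = (0 : ℝ) := hy.1 b hb
    have hyx : y = x - b := by rw [← hxy]; abel
    have hy0 : y = 0 := by
      have : inner ℝ y y = (0 : ℝ) := by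
        calc (inner ℝ y y : ℝ) = inner ℝ y (x - b) := by rw [← hyx]
          _ = (inner ℝ y x : ℝ) - inner ℝ y b := inner_sub_right _ _ _
          _ = 0 := by rw [h1, real_inner_comm, h2]; ring
      exact inner_self_eq_zero.mp this
    have hxB : x ∈ B := by rw [← hxy, hy0, add_zero]; exact hb
    have : inner ℝ x x = (0 : ℝ) := hxBC x ⟨hxB, hxC⟩
    simpa using inner_self_eq_zero.mp this
  have e1 : finrank ℝ ↥B + finrank ℝ ↥(Bᗮ ⊓ A) = finrank ℝ ↥A :=
    Submodule.finrank_add_inf_finrank_orthogonal hB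
  have e2 : finrank ℝ ↥(B ⊓ C) + finrank ℝ ↥((B ⊓ C)ᗮ ⊓ C) = finrank ℝ ↥C :=
    Submodule.finrank_add_inf_finrank_orthogonal (inf_le_right : B ⊓ C ≤ C)
  have e3 := finrank_inf_orthogonal_gen (A ⊓ Bᗮ) (C ⊓ (B ⊓ C)ᗮ)
  rw [hbot, finrank_bot] at e3
  have c1 : finrank ℝ ↥(A ⊓ Bᗮ) = finrank ℝ ↥(Bᗮ ⊓ A) := by rw [inf_comm]
  have c2 : finrank ℝ ↥(C ⊓ (B ⊓ C)ᗮ) = finrank ℝ ↥((B ⊓ C)ᗮ ⊓ C) := by rw [inf_comm]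
  show (finrank ℝ ↥((A ⊓ Bᗮ) ⊓ (C ⊓ (B ⊓ C)ᗮ)ᗮ) : ℤ) = _
  rw [e3]
  push_cast
  omega
end

section
/- Let V be a finite-dimensional real inner product space, let R and S be finite partially ordered sets, let M₁ be a function from R to subspaces of V such that {M₁(r)}_{r∈R} is a transverse family, and let M₂ be a function from S to subspaces of V such that {M₂(s)}_{s∈S} is a transverse family. Let h : R → S be an order-preserving map such that for every s ∈ S, ∑_{s' ≤ s} (h_♯M₁)(s') = ∑_{s' ≤ s} M₂(s') (equality of subspaces of V). Then for every s ∈ S, dim(M₂(s)) = ∑_{r ∈ h⁻¹(s)} dim(M₁(r)). -/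
open Module

lemma aux_finrank_sum_le {V : Type*} [NormedAddCommGroup V] [InnerProductSpace ℝ V]
    [FiniteDimensional ℝ V] {ι : Type*} (M : ι → Submodule ℝ V) (T : Finset ι) :
    finrank ℝ ↥(∑ i ∈ T, M i) ≤ ∑ i ∈ T, finrank ℝ ↥(M i) := by
  classical
  induction T using Finset.cons_induction with
  | empty => simp; exact finrank_bot ℝ V
  | cons a T ha IH =>
    rw [Finset.sum_cons, Finset.sum_cons]
    calc finrank ℝ ↥(M a + ∑ i ∈ T, M i)
        ≤ finrank ℝ ↥(M a) + finrank ℝ ↥(∑ i ∈ T, M i) :=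
          Submodule.finrank_add_le_finrank_add_finrank _ _
      _ ≤ finrank ℝ ↥(M a) + ∑ i ∈ T, finrank ℝ ↥(M i) := by omega

lemma aux_subfamily {V : Type*} [NormedAddCommGroup V] [InnerProductSpace ℝ V]
    [FiniteDimensional ℝ V] {ι : Type*} [Fintype ι] (M : ι → Submodule ℝ V)
    (htr : finrank ℝ ↥(∑ i, M i) = ∑ i, finrank ℝ ↥(M i)) (T : Finset ι) :
    finrank ℝ ↥(∑ i ∈ T, M i) = ∑ i ∈ T, finrank ℝ ↥(M i) := by
  classical
  have hsplit : (∑ i ∈ T, M i) + (∑ i ∈ Tᶜ, M i) = ∑ i, M i := Finset.sum_add_sum_compl T M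
  have h1 := aux_finrank_sum_le M T
  have h2 := aux_finrank_sum_le M Tᶜ
  have h3 : finrank ℝ ↥(∑ i, M i) ≤
      finrank ℝ ↥(∑ i ∈ T, M i) + finrank ℝ ↥(∑ i ∈ Tᶜ, M i) := by
    rw [← hsplit]; exact Submodule.finrank_add_le_finrank_add_finrank _ _
  have h4 : (∑ i ∈ T, finrank ℝ ↥(M i)) + ∑ i ∈ Tᶜ, finrank ℝ ↥(M i)
      = ∑ i, finrank ℝ ↥(M i) := Finset.sum_add_sum_compl T _
  omega

/-- Let `M₁` and `M₂` be functions from finite posets `R`, `S` to subspaces of a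
finite-dimensional real inner product space, each forming a transverse family, and let
`h : R → S` be order-preserving such that the pushforward `h_♯M₁` is Möbius equivalent to
`M₂` (their downward partial sums of subspaces agree). Then
`dim(M₂(s)) = ∑_{r ∈ h⁻¹(s)} dim(M₁(r))` for every `s ∈ S`. -/
theorem push_mobiusEquiv_implies_push_dim
    {V : Type*} [NormedAddCommGroup V] [InnerProductSpace ℝ V] [FiniteDimensional ℝ V]
    {R S : Type*} [PartialOrder R] [Fintype R] [PartialOrder S] [Fintype S]
    [DecidableEq S] [DecidableRel ((· ≤ ·) : S → S → Prop)]
    (M₁ : R → Submodule ℝ V) (M₂ : S → Submodule ℝ V)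
    (h₁ : Module.finrank ℝ ↥(∑ r, M₁ r) = ∑ r, Module.finrank ℝ ↥(M₁ r))
    (h₂ : Module.finrank ℝ ↥(∑ s, M₂ s) = ∑ s, Module.finrank ℝ ↥(M₂ s))
    (h : R → S) (hmono : Monotone h)
    (heq : ∀ s : S,
      ∑ s' ∈ Finset.univ.filter (· ≤ s), ∑ r ∈ Finset.univ.filter (fun r => h r = s'), M₁ r =
        ∑ s' ∈ Finset.univ.filter (· ≤ s), M₂ s') :
    ∀ s : S, Module.finrank ℝ ↥(M₂ s) =
      ∑ r ∈ Finset.univ.filter (fun r => h r = s), Module.finrank ℝ ↥(M₁ r) := by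
  classical
  -- fiberwise regrouping for any commutative-monoid-valued function
  have regroup : ∀ (f : R → ℕ) (s : S),
      ∑ s' ∈ Finset.univ.filter (· ≤ s), ∑ r ∈ Finset.univ.filter (fun r => h r = s'), f r =
        ∑ r ∈ Finset.univ.filter (fun r => h r ≤ s), f r := by
    intro f s
    rw [Finset.sum_sigma']
    apply Finset.sum_nbij' (fun p => p.2) (fun r => ⟨h r, r⟩) <;>
      simp +contextual [Finset.mem_sigma, Finset.mem_filter] <;>
      rintro a b hb rfl <;> simp [hb]
  have regroupM : ∀ (f : R → Submodule ℝ V) (s : S),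
      ∑ s' ∈ Finset.univ.filter (· ≤ s), ∑ r ∈ Finset.univ.filter (fun r => h r = s'), f r =
        ∑ r ∈ Finset.univ.filter (fun r => h r ≤ s), f r := by
    intro f s
    rw [Finset.sum_sigma']
    apply Finset.sum_nbij' (fun p => p.2) (fun r => ⟨h r, r⟩) <;>
      simp +contextual [Finset.mem_sigma, Finset.mem_filter] <;>
      rintro a b hb rfl <;> simp [hb]
  -- key: downward partial sums of ranks agree
  have key : ∀ s : S,
      ∑ s' ∈ Finset.univ.filter (· ≤ s), finrank ℝ ↥(M₂ s') =
        ∑ s' ∈ Finset.univ.filter (· ≤ s),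
          ∑ r ∈ Finset.univ.filter (fun r => h r = s'), finrank ℝ ↥(M₁ r) := by
    intro s
    rw [← aux_subfamily M₂ h₂, ← heq s, regroupM M₁ s,
      aux_subfamily M₁ h₁, ← regroup (fun r => finrank ℝ ↥(M₁ r)) s]
  intro s
  induction s using WellFoundedLT.induction with
  | _ s IH =>
    have hins : Finset.univ.filter (· ≤ s) =
        insert s (Finset.univ.filter (· < s)) := by
      ext x
      simp only [Finset.mem_filter, Finset.mem_insert, Finset.mem_univ, true_and]
      constructor
      · intro hx
        rcases eq_or_lt_of_le hx with h' | h'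
        · exact Or.inl h'
        · exact Or.inr h'
      · rintro (rfl | hx)
        · exact le_refl x
        · exact le_of_lt hx
    have hnot : s ∉ Finset.univ.filter (· < s) := by simp
    have hk := key s
    rw [hins, Finset.sum_insert hnot, Finset.sum_insert hnot] at hk
    have hIH : ∑ s' ∈ Finset.univ.filter (· < s), finrank ℝ ↥(M₂ s') =
        ∑ s' ∈ Finset.univ.filter (· < s),
          ∑ r ∈ Finset.univ.filter (fun r => h r = s'), finrank ℝ ↥(M₁ r) :=
      Finset.sum_congr rfl fun s' hs' => IH s' (by simpa using hs')
    omega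
end

section
/- Let P and Q be finite partially ordered sets, let (f_⋄, f^⋄) be a Galois connection from P to Q, let M be a commutative additive monoid, and let m, m' : P → M be functions such that m' is a monoidal Möbius inverse of m, i.e., ∑_{p' ≤ p} m'(p') = m(p) for all p ∈ P. Then the pushforward of m' along f_⋄ is a monoidal Möbius inverse of the pullback of m along f^⋄; explicitly, for every q ∈ Q, ∑_{q' ≤ q} ∑_{p ∈ f_⋄⁻¹(q')} m'(p) = m(f^⋄(q)). -/
/-- Monoidal Rota's Galois Connection Theorem for a Galois connection `(l, u)` between
finite posets `P` and `Q`: if `m' : P → M` is a monoidal Möbius inverse of `m : P → M`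
(`∑_{p' ≤ p} m'(p') = m(p)` for all `p`), then the pushforward of `m'` along `l` is a
monoidal Möbius inverse of the pullback of `m` along `u`:
`∑_{q' ≤ q} ∑_{p ∈ l⁻¹(q')} m'(p) = m(u(q))` for every `q ∈ Q`. -/
theorem monoidal_rgct
    {P Q : Type*} [PartialOrder P] [Fintype P] [PartialOrder Q] [Fintype Q]
    [DecidableRel ((· ≤ ·) : P → P → Prop)] [DecidableRel ((· ≤ ·) : Q → Q → Prop)]
    [DecidableEq Q]
    {M : Type*} [AddCommMonoid M]
    (l : P → Q) (u : Q → P) (hgc : GaloisConnection l u)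
    (m m' : P → M)
    (hinv : ∀ p : P, ∑ p' ∈ Finset.univ.filter (· ≤ p), m' p' = m p) :
    ∀ q : Q,
      ∑ q' ∈ Finset.univ.filter (· ≤ q), ∑ p ∈ Finset.univ.filter (fun p => l p = q'), m' p =
        m (u q) := by
  intro q
  rw [Finset.sum_fiberwise_eq_sum_filter]
  rw [← hinv (u q)]
  apply Finset.sum_congr _ (fun _ _ => rfl)
  ext p
  simp [hgc p q]
end

section
/- Let R be a finite partially ordered set, V a finite-dimensional real inner product space, and F an order-preserving map from R to the subspaces of V (ordered by inclusion). Define the Orthogonal Inverse O(F)(r) := F(r) ∩ (∑_{r' < r} F(r'))^⊥ for r ∈ R, where the empty sum is the zero subspace. Then the Orthogonal Inverse is a monoidal Möbius inverse of F: for every r ∈ R, ∑_{r' ≤ r} O(F)(r') = F(r). -/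
/-- For an order-preserving map `F` from a finite poset `R` to the subspaces of a
finite-dimensional real inner product space `V`, the Orthogonal Inverse
`O(F)(r) := F(r) ∩ (∑_{r' < r} F(r'))^⊥` is a monoidal Möbius inverse of `F`:
`∑_{r' ≤ r} O(F)(r') = F(r)` for every `r ∈ R`. -/
theorem orthogonalInverse_monoidal_mobius_inverse
    {V : Type*} [NormedAddCommGroup V] [InnerProductSpace ℝ V] [FiniteDimensional ℝ V]
    {R : Type*} [PartialOrder R] [Fintype R]
    [DecidableRel ((· ≤ ·) : R → R → Prop)] [DecidableRel ((· < ·) : R → R → Prop)]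
    (F : R → Submodule ℝ V) (hF : Monotone F) :
    ∀ r : R,
      ∑ r' ∈ Finset.univ.filter (· ≤ r),
          (F r' ⊓ (∑ r'' ∈ Finset.univ.filter (· < r'), F r'')ᗮ) = F r := by
  intro r
  induction r using WellFoundedLT.induction with
  | _ r ih =>
    haveI : DecidableEq R := fun a b => decidable_of_iff (a ≤ b ∧ b ≤ a) le_antisymm_iff.symm
    set O : R → Submodule ℝ V :=
      fun r' => F r' ⊓ (∑ r'' ∈ Finset.univ.filter (· < r'), F r'')ᗮ with hO
    set S : Submodule ℝ V := ∑ r'' ∈ Finset.univ.filter (· < r), F r'' with hS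
    -- S ≤ F r
    have hSle : S ≤ F r := by
      rw [hS]
      refine Finset.sum_induction F (· ≤ F r) (fun a b ha hb => ?_) bot_le ?_
      · rw [Submodule.add_eq_sup]; exact sup_le ha hb
      · intro x hx
        exact hF (le_of_lt (Finset.mem_filter.mp hx).2)
    -- ∑_{r' < r} O r' = S
    have hsum : ∑ r' ∈ Finset.univ.filter (· < r), O r' = S := by
      apply le_antisymm
      · rw [hS]
        exact Finset.sum_le_sum fun i _ => inf_le_left
      · rw [hS]
        calc ∑ r'' ∈ Finset.univ.filter (· < r), F r''
            = ∑ r'' ∈ Finset.univ.filter (· < r),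
                ∑ r' ∈ Finset.univ.filter (· ≤ r''), O r' := by
              refine Finset.sum_congr rfl fun x hx => ?_
              exact (ih x (Finset.mem_filter.mp hx).2).symm
          _ ≤ ∑ r'' ∈ Finset.univ.filter (· < r),
                ∑ r' ∈ Finset.univ.filter (· < r), O r' := by
              refine Finset.sum_le_sum fun i hi => ?_
              refine Finset.sum_le_sum_of_subset fun x hx => ?_
              simp only [Finset.mem_filter, Finset.mem_univ, true_and] at *
              exact lt_of_le_of_lt hx hi
          _ ≤ ∑ r' ∈ Finset.univ.filter (· < r), O r' := by
              refine Finset.sum_induction _ (· ≤ ∑ r' ∈ Finset.univ.filter (· < r), O r')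
                (fun a b ha hb => ?_) bot_le fun _ _ => le_rfl
              rw [Submodule.add_eq_sup]; exact sup_le ha hb
    -- split the sum
    have hset : Finset.univ.filter (· ≤ r) = insert r (Finset.univ.filter (· < r)) := by
      ext x
      simp [Finset.mem_filter, Finset.mem_insert, le_iff_lt_or_eq, or_comm]
    rw [hset, Finset.sum_insert (by simp), hsum, Submodule.add_eq_sup, ← hS]
    have h2 := Submodule.sup_orthogonal_inf_of_hasOrthogonalProjection (K₁ := S) (K₂ := F r) hSle
    rw [inf_comm, sup_comm]
    exact h2
end

section
/- Let n ≥ 1, let V be a finite-dimensional real inner product space, and let F : Seg_n → {subspaces of V} be intersection-monotone. Then the ×-Linear Orthogonal Inverse of F agrees with the Orthogonal Inverse of F: for every segment s ∈ Seg_n, O_×(F)(s) = F(s) ∩ (∑_{s' < s} F(s'))^⊥, where the sum ranges over all s' ∈ Seg_n with s' < s in the product order and the empty sum is the zero subspace. -/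
/-- Difference of subspaces: `W₁ ⊖ W₂ := W₁ ⊓ W₂ᗮ`. -/
noncomputable def sdiffOrtho {V : Type*} [NormedAddCommGroup V] [InnerProductSpace ℝ V]
    (W₁ W₂ : Submodule ℝ V) : Submodule ℝ V :=
  W₁ ⊓ W₂ᗮ

/-- The set of segments of the linear poset `{1 < ⋯ < n}`, as a `Finset` of pairs
`(i, j)` with `1 ≤ i ≤ j ≤ n + 1` (the value `n + 1` encoding `∞`), carrying the
product order of `ℕ × ℕ`. -/
def SegFinset (n : ℕ) : Finset (ℕ × ℕ) :=
  (Finset.Icc 1 (n + 1) ×ˢ Finset.Icc 1 (n + 1)).filter fun p => p.1 ≤ p.2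

/-- The ×-Linear Orthogonal Inverse of `F`, where `F` is assumed to incorporate the
convention `F 0 j = ⊥`. -/
noncomputable def Ox {V : Type*} [NormedAddCommGroup V] [InnerProductSpace ℝ V]
    (F : ℕ → ℕ → Submodule ℝ V) (i j : ℕ) : Submodule ℝ V :=
  if i = j then sdiffOrtho (F i i) (F (i - 1) i)
  else
    sdiffOrtho (sdiffOrtho (F i j) (F i (j - 1)))
      (sdiffOrtho (F (i - 1) j) (F (i - 1) (j - 1)))

lemma key_lemma {V : Type*} [NormedAddCommGroup V] [InnerProductSpace ℝ V]
    [FiniteDimensional ℝ V] (A A' B B' : Submodule ℝ V) (h1 : B' ≤ A') (h2 : B' ≤ B) :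
    sdiffOrtho (sdiffOrtho A A') (sdiffOrtho B B') = A ⊓ (A' ⊔ B)ᗮ := by
  simp only [sdiffOrtho]
  apply le_antisymm
  · rintro x ⟨⟨hxA, hxA'⟩, hx2⟩
    refine ⟨hxA, ?_⟩
    rw [← Submodule.inf_orthogonal]
    refine ⟨hxA', ?_⟩
    have hdecomp : B' ⊔ B'ᗮ ⊓ B = B := Submodule.sup_orthogonal_inf_of_hasOrthogonalProjection h2
    refine (Submodule.mem_orthogonal _ _).mpr fun u hu => ?_
    rw [← hdecomp] at hu
    obtain ⟨y, hy, z, hz, rfl⟩ := Submodule.mem_sup.mp hu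
    have hy0 : inner ℝ y x = (0 : ℝ) :=
      (Submodule.mem_orthogonal _ _).mp hxA' y (h1 hy)
    have hz0 : inner ℝ z x = (0 : ℝ) :=
      (Submodule.mem_orthogonal _ _).mp hx2 z ⟨hz.2, hz.1⟩
    rw [inner_add_left, hy0, hz0, add_zero]
  · rintro x ⟨hxA, hxO⟩
    rw [← Submodule.inf_orthogonal] at hxO
    obtain ⟨hx1, hx2⟩ := hxO
    exact ⟨⟨hxA, hx1⟩, Submodule.orthogonal_le inf_le_left hx2⟩

lemma sum_le_of_forall_le {V : Type*} [NormedAddCommGroup V] [InnerProductSpace ℝ V]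
    {ι : Type*} (s : Finset ι) (f : ι → Submodule ℝ V) (X : Submodule ℝ V)
    (h : ∀ p ∈ s, f p ≤ X) : (∑ p ∈ s, f p) ≤ X := by
  refine Finset.sum_induction f (· ≤ X) (fun a b ha hb => ?_) (by simp) h
  rw [Submodule.add_eq_sup]; exact sup_le ha hb

lemma le_sum_of_mem {V : Type*} [NormedAddCommGroup V] [InnerProductSpace ℝ V]
    {ι : Type*} [DecidableEq ι] (s : Finset ι) (f : ι → Submodule ℝ V) {a : ι}
    (h : a ∈ s) : f a ≤ ∑ p ∈ s, f p := by
  rw [← Finset.add_sum_erase s f h, Submodule.add_eq_sup]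
  exact le_sup_left

lemma mem_seg_filter (n i j : ℕ) (p : ℕ × ℕ) :
    p ∈ (SegFinset n).filter (fun p => p.1 ≤ i ∧ p.2 ≤ j ∧ p ≠ (i, j)) ↔
      1 ≤ p.1 ∧ p.1 ≤ p.2 ∧ p.2 ≤ n + 1 ∧ p.1 ≤ i ∧ p.2 ≤ j ∧ p ≠ (i, j) := by
  simp [SegFinset, Finset.mem_filter, Finset.mem_product, Finset.mem_Icc]
  constructor
  · rintro ⟨⟨⟨⟨h1,h2⟩,⟨h3,h4⟩⟩,h5⟩,h6,h7,h8⟩; exact ⟨h1,h5,h4,h6,h7,h8⟩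
  · rintro ⟨h1,h2,h3,h4,h5,h6⟩; exact ⟨⟨⟨⟨h1,le_trans h2 h3⟩,⟨le_trans h1 h2,h3⟩⟩,h2⟩,h4,h5,h6⟩

/-- For an intersection-monotone function `F` on the segments of `{1 < ⋯ < n}`, the
×-Linear Orthogonal Inverse agrees with the general Orthogonal Inverse:
`O_×(F)(s) = F(s) ∩ (∑_{s' < s} F(s'))^⊥` for every segment `s`. -/
theorem timesOrthogonalInverse_eq_orthogonalInverse
    {V : Type*} [NormedAddCommGroup V] [InnerProductSpace ℝ V] [FiniteDimensional ℝ V]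
    (n : ℕ) (hn : 1 ≤ n) (F : ℕ → ℕ → Submodule ℝ V)
    (hF0 : ∀ j : ℕ, F 0 j = ⊥)
    (hmono : ∀ i j k l : ℕ, 1 ≤ i → i ≤ j → j ≤ n + 1 → 1 ≤ k → k ≤ l → l ≤ n + 1 →
      i ≤ k → j ≤ l → F i j ≤ F k l)
    (hint : ∀ i j : ℕ, 1 ≤ i → i < j → j ≤ n → F (i + 1) j ⊓ F i (j + 1) = F i j) :
    ∀ i j : ℕ, 1 ≤ i → i ≤ j → j ≤ n + 1 →
      Ox F i j =
        F i j ⊓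
          (∑ p ∈ (SegFinset n).filter (fun p => p.1 ≤ i ∧ p.2 ≤ j ∧ p ≠ (i, j)),
            F p.1 p.2)ᗮ := by
  intro i j hi hij hjn
  rcases eq_or_lt_of_le hij with rfl | hlt
  · -- diagonal case
    have hsum : (∑ p ∈ (SegFinset n).filter (fun p => p.1 ≤ i ∧ p.2 ≤ i ∧ p ≠ (i, i)),
        F p.1 p.2) = F (i - 1) i := by
      apply le_antisymm
      · refine sum_le_of_forall_le _ _ _ fun p hp => ?_
        obtain ⟨h1, h2, h3, h4, h5, h6⟩ := (mem_seg_filter n i i p).mp hp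
        have hp1 : p.1 < i := by
          rcases lt_or_eq_of_le h4 with h | h
          · exact h
          · exact absurd (Prod.ext h (le_antisymm h5 (h ▸ h2))) h6
        exact hmono p.1 p.2 (i - 1) i h1 h2 h3 (by omega) (by omega) hjn (by omega) h5
      · rcases Nat.lt_or_ge i 2 with h2 | h2
        · interval_cases i
          · rw [hF0]; exact bot_le
        · refine le_sum_of_mem _ (fun p => F p.1 p.2) ((mem_seg_filter n i i (i - 1, i)).mpr ?_)
          refine ⟨by omega, by omega, hjn, by omega, le_refl _, ?_⟩
          simp only [ne_eq, Prod.mk.injEq]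
          omega
    rw [hsum, Ox, if_pos rfl, sdiffOrtho]
  · -- off-diagonal case
    have hBA : F (i - 1) (j - 1) ≤ F i (j - 1) := by
      rcases Nat.lt_or_ge i 2 with h2 | h2
      · interval_cases i
        · rw [hF0]; exact bot_le
      · exact hmono (i - 1) (j - 1) i (j - 1) (by omega) (by omega) (by omega)
          hi (by omega) (by omega) (by omega) (le_refl _)
    have hBB : F (i - 1) (j - 1) ≤ F (i - 1) j := by
      rcases Nat.lt_or_ge i 2 with h2 | h2
      · interval_cases i
        · rw [hF0, hF0]
      · exact hmono (i - 1) (j - 1) (i - 1) j (by omega) (by omega) (by omega)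
          (by omega) (by omega) hjn (le_refl _) (by omega)
    have hsum : (∑ p ∈ (SegFinset n).filter (fun p => p.1 ≤ i ∧ p.2 ≤ j ∧ p ≠ (i, j)),
        F p.1 p.2) = F i (j - 1) ⊔ F (i - 1) j := by
      apply le_antisymm
      · refine sum_le_of_forall_le _ _ _ fun p hp => ?_
        obtain ⟨h1, h2, h3, h4, h5, h6⟩ := (mem_seg_filter n i j p).mp hp
        rcases lt_or_eq_of_le h5 with h | h
        · exact le_trans (hmono p.1 p.2 i (j - 1) h1 h2 h3 hi (by omega) (by omega)
            h4 (by omega)) le_sup_left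
        · have hp1 : p.1 < i := by
            rcases lt_or_eq_of_le h4 with h' | h'
            · exact h'
            · exact absurd (Prod.ext h' h) h6
          exact le_trans (hmono p.1 p.2 (i - 1) j h1 h2 h3 (by omega) (by omega)
            hjn (by omega) (by omega)) le_sup_right
      · refine sup_le ?_ ?_
        · refine le_sum_of_mem _ (fun p => F p.1 p.2) ((mem_seg_filter n i j (i, j - 1)).mpr ?_)
          refine ⟨hi, by omega, by omega, le_refl _, by omega, ?_⟩
          simp only [ne_eq, Prod.mk.injEq]
          omega
        · rcases Nat.lt_or_ge i 2 with h2 | h2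
          · interval_cases i
            · rw [hF0]; exact bot_le
          · refine le_sum_of_mem _ (fun p => F p.1 p.2) ((mem_seg_filter n i j (i - 1, j)).mpr ?_)
            refine ⟨by omega, by omega, hjn, by omega, le_refl _, ?_⟩
            simp only [ne_eq, Prod.mk.injEq]
            omega
    rw [hsum, Ox, if_neg (Nat.ne_of_lt hlt),
      key_lemma (F i j) (F i (j - 1)) (F (i - 1) j) (F (i - 1) (j - 1)) hBA hBB]
end

section
/- Let n ≥ 1, let V be a finite-dimensional real inner product space, and let F : Seg_n → {subspaces of V} be intersection-monotone. Then the ×-Linear Orthogonal Inverse of F is a monoidal Möbius inverse of F: for every segment s ∈ Seg_n, ∑_{s' ≤ s} O_×(F)(s') = F(s), where the sum of subspaces ranges over all s' ∈ Seg_n with s' ≤ s in the product order. -/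
/-- `Ox F i j ≤ F i j`. -/
lemma Ox_le_aux {V : Type*} [NormedAddCommGroup V] [InnerProductSpace ℝ V]
    (F : ℕ → ℕ → Submodule ℝ V) (i j : ℕ) : Ox F i j ≤ F i j := by
  unfold Ox sdiffOrtho
  split_ifs with h
  · subst h; exact inf_le_left
  · exact inf_le_left.trans inf_le_left

/-- Key orthogonal decomposition: if `B, C ≤ A` then `A = B ⊔ C ⊔ (A ⊓ Bᗮ ⊓ Cᗮ)`. -/
lemma key_decomp {V : Type*} [NormedAddCommGroup V] [InnerProductSpace ℝ V]
    [FiniteDimensional ℝ V] (A B C : Submodule ℝ V) (hB : B ≤ A) (hC : C ≤ A) :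
    B ⊔ C ⊔ (A ⊓ Bᗮ ⊓ Cᗮ) = A := by
  have h : B ⊔ C ≤ A := sup_le hB hC
  have h2 := Submodule.sup_orthogonal_inf_of_hasOrthogonalProjection h
  rw [← Submodule.inf_orthogonal] at h2
  conv_rhs => rw [← h2]
  congr 1
  rw [inf_assoc, inf_comm A]


/-- For an intersection-monotone function `F` on the segments of `{1 < ⋯ < n}`, the
×-Linear Orthogonal Inverse is a monoidal Möbius inverse of `F`:
`∑_{s' ≤ s} O_×(F)(s') = F(s)` for every segment `s`, the sum ranging over segments
below `s` in the product order. -/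
theorem timesOrthogonalInverse_monoidal_mobius_inverse
    {V : Type*} [NormedAddCommGroup V] [InnerProductSpace ℝ V] [FiniteDimensional ℝ V]
    (n : ℕ) (hn : 1 ≤ n) (F : ℕ → ℕ → Submodule ℝ V)
    (hF0 : ∀ j : ℕ, F 0 j = ⊥)
    (hmono : ∀ i j k l : ℕ, 1 ≤ i → i ≤ j → j ≤ n + 1 → 1 ≤ k → k ≤ l → l ≤ n + 1 →
      i ≤ k → j ≤ l → F i j ≤ F k l)
    (hint : ∀ i j : ℕ, 1 ≤ i → i < j → j ≤ n → F (i + 1) j ⊓ F i (j + 1) = F i j) :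
    ∀ i j : ℕ, 1 ≤ i → i ≤ j → j ≤ n + 1 →
      ∑ p ∈ (SegFinset n).filter (fun p => p.1 ≤ i ∧ p.2 ≤ j), Ox F p.1 p.2 = F i j := by
  suffices H : ∀ m : ℕ, ∀ i j : ℕ, i + j ≤ m → 1 ≤ i → i ≤ j → j ≤ n + 1 →
      ∑ p ∈ (SegFinset n).filter (fun p => p.1 ≤ i ∧ p.2 ≤ j), Ox F p.1 p.2 = F i j by
    exact fun i j hi hij hj => H (i + j) i j le_rfl hi hij hj
  intro m
  induction m with
  | zero => intro i j h hi _ _; omega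
  | succ m ih =>
    intro i j hm hi hij hj
    have hmem : (i, j) ∈ (SegFinset n).filter (fun p => p.1 ≤ i ∧ p.2 ≤ j) := by
      simp only [SegFinset, Finset.mem_filter, Finset.mem_product, Finset.mem_Icc]
      omega
    apply le_antisymm
    · -- each `Ox` term is contained in `F i j`
      refine Finset.sum_induction _ (fun W => W ≤ F i j)
        (fun a b ha hb => by rw [Submodule.add_eq_sup]; exact sup_le ha hb) bot_le ?_
      intro p hp
      simp only [SegFinset, Finset.mem_filter, Finset.mem_product, Finset.mem_Icc] at hp
      refine (Ox_le_aux F p.1 p.2).trans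
        (hmono p.1 p.2 i j ?_ ?_ ?_ ?_ ?_ ?_ ?_ ?_) <;> omega
    · -- F i j ≤ sum
      have hOx : Ox F i j ≤ ∑ p ∈ (SegFinset n).filter (fun p => p.1 ≤ i ∧ p.2 ≤ j),
          Ox F p.1 p.2 := Finset.single_le_sum (f := fun p => Ox F p.1 p.2) (fun p _ => bot_le) hmem
      rcases eq_or_lt_of_le hij with rfl | hlt
      · -- diagonal case j = i
        have hB : F (i - 1) i ≤ F i i := by
          rcases Nat.eq_or_lt_of_le hi with h1 | h1
          · rw [← h1]; simp [hF0]
          · exact hmono (i - 1) i i i (by omega) (by omega) hj hi le_rfl hj (by omega) le_rfl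
        have hdec := key_decomp (F i i) (F (i - 1) i) ⊥ hB bot_le
        have hOx' : F i i ⊓ (F (i - 1) i)ᗮ ⊓ (⊥ : Submodule ℝ V)ᗮ ≤ Ox F i i := by
          simp only [Ox, sdiffOrtho, if_pos rfl]
          exact inf_le_left
        have hBsum : F (i - 1) i ≤ ∑ p ∈ (SegFinset n).filter (fun p => p.1 ≤ i ∧ p.2 ≤ i),
            Ox F p.1 p.2 := by
          rcases Nat.eq_or_lt_of_le hi with h1 | h1
          · rw [← h1]; simp [hF0]
          · have hsub : (SegFinset n).filter (fun p => p.1 ≤ i - 1 ∧ p.2 ≤ i) ⊆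
                (SegFinset n).filter (fun p => p.1 ≤ i ∧ p.2 ≤ i) :=
              Finset.monotone_filter_right _ (fun p _ hp => ⟨hp.1.trans (by omega), hp.2⟩)
            calc F (i - 1) i = _ := (ih (i - 1) i (by omega) (by omega) (by omega) hj).symm
              _ ≤ _ := Finset.sum_le_sum_of_subset hsub
        calc F i i = F (i - 1) i ⊔ ⊥ ⊔ (F i i ⊓ (F (i - 1) i)ᗮ ⊓ (⊥ : Submodule ℝ V)ᗮ) :=
              hdec.symm
          _ ≤ _ := sup_le (sup_le hBsum bot_le) (hOx'.trans hOx)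
      · -- case i < j
        have hB : F i (j - 1) ≤ F i j := by
          exact hmono i (j - 1) i j hi (by omega) (by omega) hi hij hj le_rfl (by omega)
        have hC : F (i - 1) j ≤ F i j := by
          rcases Nat.eq_or_lt_of_le hi with h1 | h1
          · rw [← h1]; simp [hF0]
          · exact hmono (i - 1) j i j (by omega) (by omega) hj hi hij hj (by omega) le_rfl
        have hdec := key_decomp (F i j) (F i (j - 1)) (F (i - 1) j) hB hC
        have hOx' : F i j ⊓ (F i (j - 1))ᗮ ⊓ (F (i - 1) j)ᗮ ≤ Ox F i j := by
          simp only [Ox, sdiffOrtho, if_neg hlt.ne]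
          exact le_inf inf_le_left (inf_le_right.trans (Submodule.orthogonal_le inf_le_left))
        have hBsum : F i (j - 1) ≤ ∑ p ∈ (SegFinset n).filter (fun p => p.1 ≤ i ∧ p.2 ≤ j),
            Ox F p.1 p.2 := by
          have hsub : (SegFinset n).filter (fun p => p.1 ≤ i ∧ p.2 ≤ j - 1) ⊆
              (SegFinset n).filter (fun p => p.1 ≤ i ∧ p.2 ≤ j) :=
            Finset.monotone_filter_right _ (fun p _ hp => ⟨hp.1, hp.2.trans (by omega)⟩)
          calc F i (j - 1) = _ := (ih i (j - 1) (by omega) hi (by omega) (by omega)).symm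
            _ ≤ _ := Finset.sum_le_sum_of_subset hsub
        have hCsum : F (i - 1) j ≤ ∑ p ∈ (SegFinset n).filter (fun p => p.1 ≤ i ∧ p.2 ≤ j),
            Ox F p.1 p.2 := by
          rcases Nat.eq_or_lt_of_le hi with h1 | h1
          · rw [← h1]; simp [hF0]
          · have hsub : (SegFinset n).filter (fun p => p.1 ≤ i - 1 ∧ p.2 ≤ j) ⊆
                (SegFinset n).filter (fun p => p.1 ≤ i ∧ p.2 ≤ j) :=
              Finset.monotone_filter_right _ (fun p _ hp => ⟨hp.1.trans (by omega), hp.2⟩)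
            calc F (i - 1) j = _ := (ih (i - 1) j (by omega) (by omega) (by omega) hj).symm
              _ ≤ _ := Finset.sum_le_sum_of_subset hsub
        calc F i j = _ := hdec.symm
          _ ≤ _ := sup_le (sup_le hBsum hCsum) (hOx'.trans hOx)
end

section
/- Let n ≥ 1, let V be a finite-dimensional real inner product space, and let {0} = Z₀ ⊆ Z₁ ⊆ ⋯ ⊆ Z_n and {0} = B₀ ⊆ B₁ ⊆ ⋯ ⊆ B_n be increasing chains of subspaces of V. Define ZB(i,j) := Z_i ∩ B_j for 0 ≤ i ≤ j ≤ n and ZB(i, n+1) := Z_i, and define LK(i,j) := Z_i ⊖ (Z_i ∩ B_{j−1}) for 0 ≤ i < j ≤ n+1. Then for all 1 ≤ i < j ≤ n: (LK(i,j) ⊖ LK(i,j+1)) ⊖ (LK(i−1,j) ⊖ LK(i−1,j+1)) = (ZB(i,j) ⊖ ZB(i,j−1)) ⊖ (ZB(i−1,j) ⊖ ZB(i−1,j−1)); and for all 1 ≤ i ≤ n: LK(i,n+1) ⊖ LK(i−1,n+1) = (ZB(i,n+1) ⊖ ZB(i,n)) ⊖ (ZB(i−1,n+1) ⊖ ZB(i−1,n)).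 (This is the identity underlying the result that the ⊇-Linear Orthogonal Inverse of the persistent Laplacian kernels equals the ×-Linear Orthogonal Inverse of the birth-death spaces at every off-diagonal segment, since the kernel of the persistent Laplacian Δ^{K_i,K_{j−1}} equals Z_i ⊖ (Z_i ∩ B_{j−1}) with Z_i the cycle space of K_i and B_{j−1} the boundary space of K_{j−1}.) -/
/-- The birth-death spaces of the chains `Z` and `B`:
`ZB(i, j) := Z_i ∩ B_j` for `j ≤ n` and `ZB(i, n + 1) := Z_i`. -/
def ZBspace {V : Type*} [NormedAddCommGroup V] [InnerProductSpace ℝ V]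
    (n : ℕ) (Z B : ℕ → Submodule ℝ V) (i j : ℕ) : Submodule ℝ V :=
  if j = n + 1 then Z i else Z i ⊓ B j

/-- The persistent Laplacian kernels: `LK(i, j) := Z_i ⊖ (Z_i ∩ B_{j−1})`. -/
noncomputable def LKspace {V : Type*} [NormedAddCommGroup V] [InnerProductSpace ℝ V]
    (Z B : ℕ → Submodule ℝ V) (i j : ℕ) : Submodule ℝ V :=
  sdiffOrtho (Z i) (Z i ⊓ B (j - 1))

/-- Key lemma: `(W ⊖ X) ⊖ (W ⊖ Y) = Y ⊖ X` when `Y ≤ W`. -/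
lemma sdiffOrtho_sdiffOrtho {V : Type*} [NormedAddCommGroup V] [InnerProductSpace ℝ V]
    [FiniteDimensional ℝ V] (W X Y : Submodule ℝ V) (hYW : Y ≤ W) :
    sdiffOrtho (sdiffOrtho W X) (sdiffOrtho W Y) = sdiffOrtho Y X := by
  have horth : (W ⊓ Yᗮ)ᗮ = Wᗮ ⊔ Y := by
    rw [show W ⊓ Yᗮ = (Wᗮ ⊔ Y)ᗮ by
        rw [← Submodule.inf_orthogonal, Submodule.orthogonal_orthogonal],
      Submodule.orthogonal_orthogonal]
  unfold sdiffOrtho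
  rw [horth]
  have : W ⊓ (Wᗮ ⊔ Y) = Y := by
    rw [sup_comm, inf_comm, sup_inf_assoc_of_le Wᗮ hYW, inf_comm,
      Submodule.inf_orthogonal_eq_bot, sup_bot_eq]
  calc W ⊓ Xᗮ ⊓ (Wᗮ ⊔ Y) = (W ⊓ (Wᗮ ⊔ Y)) ⊓ Xᗮ := by
        rw [inf_right_comm]
    _ = Y ⊓ Xᗮ := by rw [this]

/-- The ⊇-Linear Orthogonal Inverse of the persistent Laplacian kernels equals the
×-Linear Orthogonal Inverse of the birth-death spaces at every off-diagonal segment. -/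
theorem supOrthogonalInverse_LK_eq_timesOrthogonalInverse_ZB
    {V : Type*} [NormedAddCommGroup V] [InnerProductSpace ℝ V] [FiniteDimensional ℝ V]
    (n : ℕ) (hn : 1 ≤ n) (Z B : ℕ → Submodule ℝ V)
    (hZ0 : Z 0 = ⊥) (hB0 : B 0 = ⊥)
    (hZ : ∀ i : ℕ, i < n → Z i ≤ Z (i + 1)) (hB : ∀ i : ℕ, i < n → B i ≤ B (i + 1)) :
    (∀ i j : ℕ, 1 ≤ i → i < j → j ≤ n →
      sdiffOrtho (sdiffOrtho (LKspace Z B i j) (LKspace Z B i (j + 1)))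
          (sdiffOrtho (LKspace Z B (i - 1) j) (LKspace Z B (i - 1) (j + 1))) =
        sdiffOrtho (sdiffOrtho (ZBspace n Z B i j) (ZBspace n Z B i (j - 1)))
          (sdiffOrtho (ZBspace n Z B (i - 1) j) (ZBspace n Z B (i - 1) (j - 1)))) ∧
    (∀ i : ℕ, 1 ≤ i → i ≤ n →
      sdiffOrtho (LKspace Z B i (n + 1)) (LKspace Z B (i - 1) (n + 1)) =
        sdiffOrtho (sdiffOrtho (ZBspace n Z B i (n + 1)) (ZBspace n Z B i n))
          (sdiffOrtho (ZBspace n Z B (i - 1) (n + 1)) (ZBspace n Z B (i - 1) n))) := by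
  constructor
  · intro i j hi hij hjn
    have hj1 : j - 1 ≠ n + 1 := by omega
    have hj2 : j ≠ n + 1 := by omega
    have key : ∀ k : ℕ,
        sdiffOrtho (LKspace Z B k j) (LKspace Z B k (j + 1)) =
          sdiffOrtho (Z k ⊓ B j) (Z k ⊓ B (j - 1)) := by
      intro k
      have : j + 1 - 1 = j := rfl
      unfold LKspace
      rw [this]
      exact sdiffOrtho_sdiffOrtho (Z k) (Z k ⊓ B (j - 1)) (Z k ⊓ B j) inf_le_left
    rw [key i, key (i - 1)]
    simp only [ZBspace, if_neg hj1, if_neg hj2]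
  · intro i hi hin
    have h1 : n ≠ n + 1 := by omega
    simp only [ZBspace, if_neg h1, LKspace, Nat.add_sub_cancel, if_true, eq_self_iff_true]
end
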